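/- Transversality lemma for H^1, first case: let R ≥ 1, (z,t), (ζ,τ) ∈ H^1 = R²×R distinct with Euclidean norms ≤ R and |z−ζ| ≥ |t−τ|/(2R), and let δ ∈ (0,1). Then the set {θ ∈ [0,π) : |π_{V_θ⊥}(z) − π_{V_θ⊥}(ζ)| < δ} is contained in at most 2 intervals, each of length at most C(R) · δ / d_E((z,t),(ζ,τ)), for an absolute constant C(R). -/

import Mathlib

noncomputable section

abbrev E2 := EuclideanSpace ℝ (Fin 2)

/-- the standard symplectic form on `ℝ²`: `ω(z,w) = x v − y u` -/
def symp2 (z w : E2) : ℝ := z 0 * w 1 - z 1 * w 0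

/-- the unit vector at angle `θ` -/
def vθ (θ : ℝ) : E2 := !₂[Real.cos θ, Real.sin θ]

/-- the line in `ℝ²` at angle `θ` -/
def Vθ (θ : ℝ) : Submodule ℝ E2 := Submodule.span ℝ {vθ θ}

/-- Euclidean orthogonal projection onto a subspace, as a map `ℝ² → ℝ²` -/
def projV (V : Submodule ℝ E2) (z : E2) : E2 := (V.orthogonalProjectionOnto z : E2)

/-- Euclidean distance on `H¹ = ℝ² × ℝ` -/
def dE (p q : E2 × ℝ) : ℝ := Real.sqrt (‖p.1 - q.1‖ ^ 2 + (p.2 - q.2) ^ 2)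

open Real

lemma norm_vθ (θ : ℝ) : ‖vθ θ‖ = 1 := by
  rw [EuclideanSpace.norm_eq]
  simp [vθ, Fin.sum_univ_two]

lemma proj_norm (θ : ℝ) (w : E2) :
    ‖projV (Vθ θ)ᗮ w‖ = |w 0 * sin θ - w 1 * cos θ| := by
  have h1 : projV (Vθ θ)ᗮ w = w - ((Vθ θ).orthogonalProjectionOnto w : E2) := by
    rw [projV, Submodule.orthogonalProjectionOnto_orthogonal]; rfl
  have h2 : ((Vθ θ).orthogonalProjectionOnto w : E2) = (inner ℝ (vθ θ) w : ℝ) • vθ θ :=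
    Submodule.starProjection_unit_singleton ℝ (norm_vθ θ) w
  have hinner : (inner ℝ (vθ θ) w : ℝ) = cos θ * w 0 + sin θ * w 1 := by
    rw [PiLp.inner_apply]
    simp [vθ, Fin.sum_univ_two]
    ring
  rw [h1, h2, hinner, EuclideanSpace.norm_eq]
  simp only [Fin.sum_univ_two, PiLp.sub_apply, PiLp.smul_apply, smul_eq_mul]
  have e0 : (vθ θ) 0 = cos θ := rfl
  have e1 : (vθ θ) 1 = sin θ := rfl
  rw [e0, e1]
  have hpyth := sin_sq_add_cos_sq θ
  have key : (w 0 - (cos θ * w 0 + sin θ * w 1) * cos θ) ^ 2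
       + (w 1 - (cos θ * w 0 + sin θ * w 1) * sin θ) ^ 2
       = (w 0 * sin θ - w 1 * cos θ) ^ 2 := by
    linear_combination ((cos θ * w 0 + sin θ * w 1)^2 - w 0 ^ 2 - w 1 ^ 2) * hpyth
  simp only [Real.norm_eq_abs, sq_abs]
  rw [key, Real.sqrt_sq_eq_abs]

lemma sin_small_cover {ε x : ℝ} (hε0 : 0 < ε) (hε1 : ε ≤ 1)
    (hx1 : -π < x) (hx2 : x < π) (h : |Real.sin x| < ε) :
    |x| ≤ π/2*ε ∨ |x - π| ≤ π/2*ε ∨ |x + π| ≤ π/2*ε := by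
  set a := arcsin ε with ha
  have ha0 : 0 < a := arcsin_pos.2 hε0
  have ha2 : a ≤ π/2 := arcsin_le_pi_div_two ε
  have hsa : Real.sin a = ε := sin_arcsin (by linarith) hε1
  have hπ := pi_pos
  have haε : a ≤ π/2*ε := by
    have h2 := Real.mul_le_sin ha0.le ha2
    rw [hsa] at h2
    have h3 := mul_le_mul_of_nonneg_right h2 hπ.le
    field_simp at h3
    linarith
  have hsabs : Real.sin |x| = |Real.sin x| := by
    rcases le_or_gt 0 x with hx | hx
    · rw [abs_of_nonneg hx, abs_of_nonneg (sin_nonneg_of_nonneg_of_le_pi hx hx2.le)]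
    · have hs : 0 ≤ Real.sin (-x) := sin_nonneg_of_nonneg_of_le_pi (by linarith) (by linarith)
      rw [Real.sin_neg] at hs
      rw [abs_of_neg hx, Real.sin_neg, abs_of_nonpos (by linarith)]
  have key : |x| < a ∨ π - a < |x| := by
    by_contra hc
    push_neg at hc
    obtain ⟨h1, h2⟩ := hc
    have hge : ε ≤ Real.sin |x| := by
      rcases le_or_gt |x| (π/2) with hle | hgt
      · rw [← hsa]
        exact sin_le_sin_of_le_of_le_pi_div_two (by linarith) hle h1
      · rw [← Real.sin_pi_sub, ← hsa]
        exact sin_le_sin_of_le_of_le_pi_div_two (by linarith) (by linarith) (by linarith)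
    rw [hsabs] at hge; linarith
  rcases key with hk | hk
  · left; linarith [le_trans hk.le haε]
  · rcases le_or_gt 0 x with hx | hx
    · right; left
      rw [abs_of_nonneg hx] at hk
      rw [abs_of_nonpos (by linarith)]
      linarith
    · right; right
      rw [abs_of_neg hx] at hk
      rw [abs_of_nonneg (by linarith)]
      linarith

set_option maxHeartbeats 1000000 in
/-- (Transversality, first case.)  Let `R ≥ 1`.  There is a constant
`C = C(R) > 0` such that for all distinct `(z,t), (ζ,τ) ∈ H¹` of Euclidean norm at most `R`
with `|z−ζ| ≥ |t−τ|/(2R)`, and all `δ ∈ (0,1)`, the set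
`{θ ∈ [0,π) : |π_{V_θ⊥}(z) − π_{V_θ⊥}(ζ)| < δ}` lies in at most 2 intervals, each of
length at most `C δ / d_E((z,t),(ζ,τ))`. -/
theorem transversality_first_case (R : ℝ) (hR : 1 ≤ R) :
    ∃ C : ℝ, 0 < C ∧
      ∀ (z ζ : E2) (t τ : ℝ) (δ : ℝ), ((z, t) : E2 × ℝ) ≠ (ζ, τ) →
        dE (z, t) 0 ≤ R → dE (ζ, τ) 0 ≤ R → |t - τ| / (2 * R) ≤ ‖z - ζ‖ →
        0 < δ → δ < 1 →
        ∃ a₁ b₁ a₂ b₂ : ℝ,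
          b₁ - a₁ ≤ C * δ / dE (z, t) (ζ, τ) ∧
          b₂ - a₂ ≤ C * δ / dE (z, t) (ζ, τ) ∧
          {θ : ℝ | θ ∈ Set.Ico 0 π ∧ ‖projV (Vθ θ)ᗮ z - projV (Vθ θ)ᗮ ζ‖ < δ} ⊆
            Set.Icc a₁ b₁ ∪ Set.Icc a₂ b₂ := by
  have hπ := pi_pos
  refine ⟨π * (1 + 2*R), by positivity, ?_⟩
  intro z ζ t τ δ hne hzR hζR htr hδ0 hδ1
  have hR2 : 0 < 2 * R := by linarith
  set w : E2 := z - ζ with hw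
  have hρ0 : 0 < ‖w‖ := by
    rcases eq_or_ne z ζ with h | h
    · exfalso
      have hz0 : ‖z - ζ‖ = 0 := by simp [h]
      rw [hz0] at htr
      have htτ : |t - τ| ≤ 0 := by
        by_contra hcon
        push_neg at hcon
        have := div_pos hcon hR2
        linarith
      have : t = τ := by
        have := abs_nonneg (t - τ)
        have : |t - τ| = 0 := le_antisymm htτ this
        have := abs_eq_zero.1 this
        linarith
      exact hne (by rw [h, this])
    · rw [hw, norm_pos_iff]
      exact sub_ne_zero.2 h
  set ρ := ‖w‖ with hρ
  have htτρ : |t - τ| ≤ 2 * R * ρ := by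
    rw [div_le_iff₀ hR2] at htr
    calc |t - τ| ≤ ‖z - ζ‖ * (2 * R) := htr
    _ = 2 * R * ρ := by rw [mul_comm]
  have hdE_pos : 0 < dE (z, t) (ζ, τ) := by
    rw [dE]
    apply Real.sqrt_pos.2
    have := sq_nonneg (t - τ)
    nlinarith [sq_nonneg ρ]
  have hdE_le : dE (z, t) (ζ, τ) ≤ (1 + 2*R) * ρ := by
    rw [dE]
    have h1 : ‖(z,t).1 - (ζ,τ).1‖ ^ 2 + ((z,t).2 - (ζ,τ).2) ^ 2 ≤ ((1 + 2*R) * ρ) ^ 2 := by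
      simp only
      have habs : |t - τ| ^ 2 = (t - τ) ^ 2 := sq_abs _
      nlinarith [abs_nonneg (t - τ), hρ0.le]
    calc Real.sqrt (‖(z,t).1 - (ζ,τ).1‖ ^ 2 + ((z,t).2 - (ζ,τ).2) ^ 2)
        ≤ Real.sqrt (((1 + 2*R) * ρ) ^ 2) := Real.sqrt_le_sqrt h1
      _ = (1 + 2*R) * ρ := Real.sqrt_sq (by nlinarith [hρ0.le])
  have hkey : ∀ θ : ℝ, ‖projV (Vθ θ)ᗮ z - projV (Vθ θ)ᗮ ζ‖ = |w 0 * sin θ - w 1 * cos θ| := by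
    intro θ
    have : projV (Vθ θ)ᗮ z - projV (Vθ θ)ᗮ ζ = projV (Vθ θ)ᗮ w := by
      simp only [projV, hw, map_sub, Submodule.coe_sub]
    rw [this, proj_norm]
  by_cases hcase : ρ ≤ δ
  · refine ⟨0, π, 1, 0, ?_, ?_, ?_⟩
    · rw [le_div_iff₀ hdE_pos]
      have : dE (z, t) (ζ, τ) ≤ (1 + 2*R) * δ := le_trans hdE_le (by nlinarith)
      calc (π - 0) * dE (z, t) (ζ, τ) ≤ π * ((1 + 2*R) * δ) := by nlinarith
        _ = π * (1 + 2*R) * δ := by ring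
    · have : 0 ≤ π * (1 + 2*R) * δ / dE (z, t) (ζ, τ) := by positivity
      linarith
    · rintro θ ⟨⟨h1, h2⟩, _⟩
      exact Or.inl ⟨h1, h2.le⟩
  push_neg at hcase
  -- polar decomposition of w
  set c : ℂ := ⟨w 0, w 1⟩ with hc
  have habs : ‖c‖ = ρ := by
    rw [hρ, EuclideanSpace.norm_eq, Fin.sum_univ_two, Complex.norm_def, Complex.normSq_mk]
    simp only [Real.norm_eq_abs, sq_abs]
    ring_nf
  have hc0 : c ≠ 0 := by
    intro hzero
    rw [hzero] at habs
    simp at habs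
    rw [← habs] at hρ0
    exact lt_irrefl 0 hρ0
  set φ := Complex.arg c with hφ
  have hw0 : w 0 = ρ * cos φ := by
    rw [← habs, hφ]
    exact (Complex.norm_mul_cos_arg c).symm
  have hw1 : w 1 = ρ * sin φ := by
    rw [← habs, hφ]
    exact (Complex.norm_mul_sin_arg c).symm
  have hsin : ∀ θ : ℝ, w 0 * sin θ - w 1 * cos θ = ρ * sin (θ - φ) := by
    intro θ
    rw [hw0, hw1, Real.sin_sub]
    ring
  set n : ℤ := ⌊φ / π⌋ with hn
  set θ0 : ℝ := φ - n * π with hθ0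
  have hθ0a : 0 ≤ θ0 := by
    have h1 : (n : ℝ) ≤ φ / π := Int.floor_le _
    have := mul_le_mul_of_nonneg_right h1 hπ.le
    rw [div_mul_cancel₀ _ hπ.ne'] at this
    linarith
  have hθ0b : θ0 < π := by
    have h1 : φ / π < n + 1 := Int.lt_floor_add_one _
    have := mul_lt_mul_of_pos_right h1 hπ
    rw [div_mul_cancel₀ _ hπ.ne'] at this
    nlinarith
  have hsin2 : ∀ θ : ℝ, |sin (θ - φ)| = |sin (θ - θ0)| := by
    intro θ
    have he : θ - φ = (θ - θ0) - n * π := by rw [hθ0]; ring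
    rw [he, Real.sin_sub_int_mul_pi, abs_mul]
    rcases Int.even_or_odd n with hpar | hpar
    · rw [hpar.neg_one_zpow]; simp
    · rw [hpar.neg_one_zpow]; simp
  set ε : ℝ := δ / ρ with hε
  have hε0 : 0 < ε := div_pos hδ0 hρ0
  have hε1 : ε < 1 := (div_lt_one hρ0).2 hcase
  set L : ℝ := π/2 * ε with hL
  have hL0 : 0 < L := by positivity
  have hLπ : L < π/2 := by nlinarith
  have h2L : 2 * L ≤ π * (1 + 2*R) * δ / dE (z, t) (ζ, τ) := by
    rw [le_div_iff₀ hdE_pos]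
    have hstep : 2 * L * dE (z, t) (ζ, τ) ≤ 2 * L * ((1 + 2*R) * ρ) := by
      apply mul_le_mul_of_nonneg_left hdE_le (by positivity)
    have heq : 2 * L * ((1 + 2*R) * ρ) = π * (1 + 2*R) * δ := by
      rw [hL, hε]
      field_simp
    linarith
  have hmain : ∀ θ : ℝ, θ ∈ {θ : ℝ | θ ∈ Set.Ico 0 π ∧ ‖projV (Vθ θ)ᗮ z - projV (Vθ θ)ᗮ ζ‖ < δ} →
      |θ - θ0| ≤ L ∨ |θ - θ0 - π| ≤ L ∨ |θ - θ0 + π| ≤ L := by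
    rintro θ ⟨⟨hθl, hθu⟩, hlt⟩
    rw [hkey, hsin, abs_mul, abs_of_pos hρ0, hsin2] at hlt
    have hlt2 : |sin (θ - θ0)| < ε := by
      rw [hε, lt_div_iff₀ hρ0, mul_comm]
      exact hlt
    have hx1 : -π < θ - θ0 := by linarith
    have hx2 : θ - θ0 < π := by linarith
    exact sin_small_cover hε0 hε1.le hx1 hx2 hlt2
  rcases lt_or_ge θ0 (π/2) with hb | hb
  · refine ⟨θ0 - L, θ0 + L, θ0 + π - L, θ0 + π + L, by linarith, by linarith, ?_⟩
    intro θ hθ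
    obtain ⟨⟨hθl, hθu⟩, -⟩ := id hθ
    rcases hmain θ hθ with hcv | hcv | hcv <;> rw [abs_le] at hcv
    · exact Or.inl ⟨by linarith [hcv.1], by linarith [hcv.2]⟩
    · exact Or.inr ⟨by linarith [hcv.1], by linarith [hcv.2]⟩
    · exfalso; linarith [hcv.2]
  · refine ⟨θ0 - L, θ0 + L, θ0 - π - L, θ0 - π + L, by linarith, by linarith, ?_⟩
    intro θ hθ
    obtain ⟨⟨hθl, hθu⟩, -⟩ := id hθ
    rcases hmain θ hθ with hcv | hcv | hcv <;> rw [abs_le] at hcv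
    · exact Or.inl ⟨by linarith [hcv.1], by linarith [hcv.2]⟩
    · exfalso; linarith [hcv.1]
    · exact Or.inr ⟨by linarith [hcv.1], by linarith [hcv.2]⟩
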